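/- Every dense linear subspace E of ℓ^∞ (real bounded sequences with the sup norm) has algebraic (Hamel) dimension equal to the cardinality of the continuum. -/

import Mathlib

open Cardinal Submodule

local notation "Linf" => lp (fun _ : ℕ => ℝ) ⊤

noncomputable instance : Module ℚ (lp (fun _ : ℕ => ℝ) ⊤) :=
  Module.compHom _ (algebraMap ℚ ℝ)

/-- the real span is contained in the closure of the rational span -/
lemma real_span_subset_closure_rat_span (s : Set Linf) :
    (span ℝ s : Set Linf) ⊆ closure (span ℚ s : Set Linf) := by
  intro x hx
  induction hx using Submodule.span_induction with
  | mem x h => exact subset_closure (subset_span h)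
  | zero => exact subset_closure (zero_mem _)
  | add x y _ _ ihx ihy =>
    exact (span ℚ s).toAddSubgroup.topologicalClosure.add_mem ihx ihy
  | smul r x _ ih =>
    have h1 : (r, x) ∈ closure ((Set.range ((↑) : ℚ → ℝ)) ×ˢ (span ℚ s : Set Linf)) := by
      rw [closure_prod_eq]
      exact ⟨by rw [Rat.denseRange_cast.closure_eq]; trivial, ih⟩
    have hc : Continuous (fun p : ℝ × Linf => p.1 • p.2) := continuous_fst.smul continuous_snd
    have h2 := (image_closure_subset_closure_image hc) (Set.mem_image_of_mem _ h1)
    refine closure_mono ?_ h2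
    rintro _ ⟨⟨a, b⟩, ⟨⟨q, rfl⟩, hb⟩, rfl⟩
    exact (span ℚ s).smul_mem q hb

lemma indicator_memlp (A : Set ℕ) : Memℓp (fun n => A.indicator (fun _ => (1:ℝ)) n) ⊤ := by
  apply memℓp_infty
  refine ⟨1, ?_⟩
  rintro x ⟨n, rfl⟩
  by_cases h : n ∈ A <;> simp [Set.indicator, h]

theorem dense_subspace_of_linfty_rank_continuum
    (E : Submodule ℝ (lp (fun _ : ℕ => ℝ) ⊤))
    (hE : Dense (E : Set (lp (fun _ : ℕ => ℝ) ⊤))) :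
    Module.rank ℝ E = Cardinal.continuum := by
  have hupper : Module.rank ℝ E ≤ Cardinal.continuum := by
    refine (rank_le_card ℝ E).trans ?_
    have h1 : #E ≤ #Linf := mk_le_of_injective Subtype.val_injective
    have h2 : #Linf ≤ #(ℕ → ℝ) := mk_le_of_injective Subtype.val_injective
    have h3 : #(ℕ → ℝ) = Cardinal.continuum := by
      rw [← Cardinal.power_def, Cardinal.mk_real, Cardinal.mk_denumerable,
        Cardinal.continuum_power_aleph0]
    exact h1.trans (h2.trans h3.le)
  -- lower bound
  set ι : Set E := Module.Basis.ofVectorSpaceIndex ℝ E with hι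
  set s : Set Linf := Subtype.val '' ι with hs
  have hspan : span ℝ s = E := by
    have h0 : span ℝ ι = ⊤ := by
      rw [hι, ← Module.Basis.range_ofVectorSpace ℝ E]; exact Module.Basis.span_eq _
    have h1 : span ℝ (⇑E.subtype '' ι) = E := by
      rw [← Submodule.map_span, h0, Submodule.map_top, Submodule.range_subtype]
    simpa using h1
  -- density of rational span
  have hdense : Dense (span ℚ s : Set Linf) := by
    rw [dense_iff_closure_eq]
    apply Set.eq_univ_of_univ_subset
    calc Set.univ = closure (E : Set Linf) := hE.closure_eq.symm
    _ ⊆ closure (closure (span ℚ s : Set Linf)) := by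
        apply closure_mono; rw [← hspan]; exact real_span_subset_closure_rat_span s
    _ = closure (span ℚ s : Set Linf) := closure_closure
  -- cardinality of rational span
  have hcard : #(span ℚ s) ≤ max #s Cardinal.aleph0 := by
    have hsurj : Function.Surjective
        (fun c : s →₀ ℚ => (⟨Finsupp.linearCombination ℚ (Subtype.val : s → Linf) c, by
          have := Finsupp.range_linearCombination (R := ℚ) (v := (Subtype.val : s → Linf))
          rw [Subtype.range_coe] at this
          rw [← this]
          exact ⟨c, rfl⟩⟩ : span ℚ s)) := by
      rintro ⟨x, hx⟩
      have := Finsupp.range_linearCombination (R := ℚ) (v := (Subtype.val : s → Linf))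
      rw [Subtype.range_coe] at this
      rw [← this] at hx
      obtain ⟨c, hc⟩ := hx
      exact ⟨c, Subtype.ext hc⟩
    refine (mk_le_of_surjective hsurj).trans ?_
    rcases finite_or_infinite s with h | h
    · have : Countable (s →₀ ℚ) := by infer_instance
      exact (Cardinal.mk_le_aleph0).trans (le_max_right _ _)
    · rw [Cardinal.mk_finsupp_of_infinite, Cardinal.mk_denumerable ℚ]
  -- indicators
  set x : Set ℕ → Linf := fun A => ⟨fun n => A.indicator (fun _ => (1:ℝ)) n, indicator_memlp A⟩
    with hx
  have hsep : ∀ A B : Set ℕ, A ≠ B → 1 ≤ dist (x A) (x B) := by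
    intro A B hAB
    obtain ⟨n, hn⟩ : ∃ n, n ∈ (A \ B) ∪ (B \ A) := by
      by_contra h
      push_neg at h
      exact hAB (Set.eq_of_subset_of_subset
        (fun n hn => by_contra fun hB => h n (Or.inl ⟨hn, hB⟩))
        (fun n hn => by_contra fun hA => h n (Or.inr ⟨hn, hA⟩)))
    rw [dist_eq_norm]
    have := lp.norm_apply_le_norm (p := ⊤) (E := fun _ : ℕ => ℝ) (by norm_num) (x A - x B) n
    refine le_trans ?_ this
    have hcoe : (x A - x B : Linf) n = (x A : ∀ _ : ℕ, ℝ) n - (x B : ∀ _ : ℕ, ℝ) n := by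
      simp [lp.coeFn_sub]
    rw [hcoe]
    rcases hn with ⟨hA, hB⟩ | ⟨hB, hA⟩ <;>
      simp [hx, Set.indicator, hA, hB]
  -- choose close elements
  have hch : ∀ A : Set ℕ, ∃ y ∈ (span ℚ s : Set Linf), dist (x A) y < 1/2 := by
    intro A
    rcases Metric.dense_iff.mp hdense (x A) (1/2) (by norm_num) with ⟨y, hy1, hy2⟩
    exact ⟨y, hy2, by rwa [Metric.mem_ball, dist_comm] at hy1⟩
  choose f hf1 hf2 using hch
  have hinj : Function.Injective (fun A => (⟨f A, hf1 A⟩ : span ℚ s)) := by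
    intro A B hAB
    by_contra hne
    have h1 : f A = f B := congrArg Subtype.val hAB
    have := hsep A B hne
    have : (1:ℝ) ≤ dist (x A) (f A) + dist (f A) (x B) := le_trans this (dist_triangle _ _ _)
    have h2 := hf2 A
    rw [h1] at this h2
    rw [dist_comm (f B) (x B)] at this
    linarith [hf2 B]
  have hlow : Cardinal.continuum ≤ max (Module.rank ℝ E) Cardinal.aleph0 := by
    calc Cardinal.continuum = #(Set ℕ) := Cardinal.mk_set_nat.symm
    _ ≤ #(span ℚ s) := mk_le_of_injective hinj
    _ ≤ max #s Cardinal.aleph0 := hcard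
    _ ≤ max (Module.rank ℝ E) Cardinal.aleph0 := by
        apply max_le_max_right
        calc #s ≤ #ι := Cardinal.mk_image_le
        _ = Module.rank ℝ E := (Module.Basis.ofVectorSpace ℝ E).mk_eq_rank''
  have : Cardinal.continuum ≤ Module.rank ℝ E := by
    rcases max_cases (Module.rank ℝ E) Cardinal.aleph0 with ⟨h1, _⟩ | ⟨h1, _⟩
    · rwa [h1] at hlow
    · rw [h1] at hlow
      exact absurd hlow (not_le.mpr Cardinal.aleph0_lt_continuum)
  exact le_antisymm hupper this
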